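/- Let V be a finite type with n = |V| elements, adj : V → V → Prop a directed edge relation, L a natural number, and p : {0,1,…,L} → V a directed path, i.e., adj (p j) (p (j+1)) for every j < L. Let d̂ : V → ℤ, let F : V → Finset V, let H ⊆ V be a set of 'heavy' vertices, and let c ≥ 1 and m ≥ 1 be integers. Assume: (a) for every j < L with p j ∉ H, d̂(p (j+1)) ≤ d̂(p j) + 1; (b) for every j < L, either p (j+1) ∈ F(p j) or d̂(p (j+1)) ≤ d̂(p j) + 1; (c) for all u, v with v ∈ F(u), |d̂(v) − d̂(u)| ≤ c; (d) for every u ∈ H, m ≤ |F(u)|. Then m · (d̂(p L) − d̂(p 0) − L) ≤ 3·c·n. -/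

import Mathlib

/-- Along a directed path `p` with `L` edges, if light vertices (those outside
`H`) contribute no error, every vertex's forward neighborhood has estimates
within `c`, every path edge either goes into the tail's forward neighborhood or
contributes no error, and every heavy vertex has forward neighborhood of size
at least `m`, then `m * (d̂(p L) − d̂(p 0) − L) ≤ 3 * c * n`. -/
theorem heavy_light_error_bound {V : Type*} [Fintype V] (n : ℕ) (hn : n = Fintype.card V)
    (adj : V → V → Prop) (L : ℕ) (p : Fin (L + 1) → V)
    (hpath : ∀ j : Fin L, adj (p j.castSucc) (p j.succ))
    (dhat : V → ℤ) (F : V → Finset V) (H : Set V) (c m : ℤ) (hc : 1 ≤ c) (hm : 1 ≤ m)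
    (hlight : ∀ j : Fin L, p j.castSucc ∉ H → dhat (p j.succ) ≤ dhat (p j.castSucc) + 1)
    (hedge : ∀ j : Fin L, p j.succ ∈ F (p j.castSucc) ∨ dhat (p j.succ) ≤ dhat (p j.castSucc) + 1)
    (hclose : ∀ u v : V, v ∈ F u → |dhat v - dhat u| ≤ c)
    (hheavy : ∀ u ∈ H, m ≤ ((F u).card : ℤ)) :
    m * (dhat (p (Fin.last L)) - dhat (p 0) - (L : ℤ)) ≤ 3 * c * (n : ℤ) := by
  classical
  set P : ℕ → V := fun j => p ⟨min j L, Nat.lt_succ_of_le (Nat.min_le_right j L)⟩ with hPdef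
  set b : ℕ → ℤ := fun j => dhat (P j) - (j : ℤ) with hbdef
  have hPc : ∀ (j : ℕ) (hj : j < L), P j = p (Fin.castSucc ⟨j, hj⟩) := by
    intro j hj
    simp only [hPdef]
    congr 1
    apply Fin.ext
    simp [Nat.min_eq_left hj.le]
  have hPs : ∀ (j : ℕ) (hj : j < L), P (j + 1) = p (Fin.succ ⟨j, hj⟩) := by
    intro j hj
    simp only [hPdef]
    congr 1
    apply Fin.ext
    simp [Nat.min_eq_left hj]
  have hbeq : ∀ j : ℕ, b j = dhat (P j) - (j : ℤ) := fun j => rfl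
  have hbad : ∀ (j : ℕ), j < L → b j < b (j + 1) →
      P (j + 1) ∈ F (P j) ∧ P j ∈ H := by
    intro j hj hlt
    rw [hbeq j, hbeq (j + 1)] at hlt
    push_cast at hlt
    have hgt : dhat (P j) + 1 < dhat (P (j + 1)) := by linarith
    constructor
    · rcases hedge ⟨j, hj⟩ with h | h
      · rw [hPc j hj, hPs j hj]; exact h
      · rw [hPc j hj, hPs j hj] at hgt; linarith
    · by_contra hH
      have hH' : p (Fin.castSucc ⟨j, hj⟩) ∉ H := by rw [← hPc j hj]; exact hH
      have := hlight ⟨j, hj⟩ hH'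
      rw [← hPc j hj, ← hPs j hj] at this
      linarith
  have hstep : ∀ (j : ℕ), j < L → b (j + 1) ≤ b j + (c - 1) := by
    intro j hj
    by_cases hlt : b j < b (j + 1)
    · have hmem := (hbad j hj hlt).1
      have h2 := abs_le.mp (hclose _ _ hmem)
      rw [hbeq j, hbeq (j + 1)]
      push_cast
      linarith [h2.1, h2.2]
    · push_neg at hlt; linarith
  have hgoal : dhat (p (Fin.last L)) - dhat (p 0) - (L : ℤ) = b L - b 0 := by
    have h1 : p (Fin.last L) = P L := by
      simp only [hPdef]; congr 1; apply Fin.ext; simp [Fin.last]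
    have h2 : p 0 = P 0 := by
      simp only [hPdef]; congr 1
    rw [hbeq L, hbeq 0, h1, h2]
    push_cast
    ring
  rw [hgoal]
  set E := b L - b 0 with hE
  by_cases hEpos : E ≤ 0
  · have h1 : m * E ≤ 0 := mul_nonpos_of_nonneg_of_nonpos (by linarith) hEpos
    have h2 : (0:ℤ) ≤ 3 * c * (n:ℤ) :=
      mul_nonneg (by linarith) (Nat.cast_nonneg n)
    linarith
  push_neg at hEpos
  have hL1 : 1 ≤ L := by
    by_contra h
    have hL0 : L = 0 := by omega
    have : E = 0 := by rw [hE, hL0, sub_self]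
    linarith
  have h3c : (0:ℤ) < 3 * c := by linarith
  set T : ℕ := ((E - 1) / (3 * c)).toNat with hT
  have hq0 : 0 ≤ (E - 1) / (3 * c) := Int.ediv_nonneg (by linarith) (by linarith)
  have hTcast : ((T : ℤ)) = (E - 1) / (3 * c) := by rw [hT]; exact Int.toNat_of_nonneg hq0
  have hmodlt := Int.emod_lt_of_pos (E - 1) h3c
  have hmodge := Int.emod_nonneg (E - 1) (by linarith : (3*c) ≠ 0)
  have hdm := Int.mul_ediv_add_emod (E - 1) (3 * c)
  have hT1 : 3 * c * (T : ℤ) ≤ E - 1 := by rw [hTcast]; linarith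
  have hT2 : E ≤ 3 * c * ((T : ℤ) + 1) := by rw [hTcast]; nlinarith
  have hex : ∀ t : ℕ, ∃ j, j < L ∧ b 0 + 3 * c * ((min t T : ℕ) : ℤ) < b (j + 1) := by
    intro t
    refine ⟨L - 1, by omega, ?_⟩
    have hsub : L - 1 + 1 = L := by omega
    rw [hsub]
    have h1 : ((min t T : ℕ) : ℤ) ≤ (T : ℤ) := by exact_mod_cast min_le_right t T
    have h2 : 3 * c * ((min t T : ℕ) : ℤ) ≤ 3 * c * (T : ℤ) :=
      mul_le_mul_of_nonneg_left h1 (by linarith)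
    have hbL : b L = b 0 + E := by rw [hE]; ring
    linarith
  set J : ℕ → ℕ := fun t => Nat.find (hex t) with hJ
  have hJspec : ∀ t : ℕ, t ≤ T → J t < L ∧ b 0 + 3 * c * (t:ℤ) < b (J t + 1) := by
    intro t ht
    have hspec := Nat.find_spec (hex t)
    refine ⟨hspec.1, ?_⟩
    calc b 0 + 3 * c * (t:ℤ) = b 0 + 3 * c * ((min t T : ℕ) : ℤ) := by
          rw [min_eq_left ht]
      _ < b (J t + 1) := hspec.2
  have hJmin : ∀ t : ℕ, t ≤ T → ∀ j, j < J t → b (j+1) ≤ b 0 + 3 * c * (t:ℤ) := by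
    intro t ht j hj
    have hj' : j < Nat.find (hex t) := by simpa only [hJ] using hj
    have hmin := Nat.find_min (hex t) hj'
    rw [min_eq_left ht] at hmin
    push_neg at hmin
    exact hmin (lt_trans hj (hJspec t ht).1)
  have hJlow : ∀ t : ℕ, t ≤ T → b (J t) ≤ b 0 + 3 * c * (t:ℤ) := by
    intro t ht
    rcases Nat.eq_zero_or_pos (J t) with h0 | hpos
    · rw [h0]
      have : (0:ℤ) ≤ 3*c*(t:ℤ) := mul_nonneg (by linarith) (Nat.cast_nonneg t)
      linarith
    · obtain ⟨j, hj⟩ : ∃ j, J t = j + 1 := ⟨J t - 1, by omega⟩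
      rw [hj]
      exact hJmin t ht j (by omega)
  have hJbadmem : ∀ t : ℕ, t ≤ T → P (J t + 1) ∈ F (P (J t)) ∧ P (J t) ∈ H := by
    intro t ht
    exact hbad _ (hJspec t ht).1 (lt_of_le_of_lt (hJlow t ht) (hJspec t ht).2)
  have hJnext : ∀ t : ℕ, t ≤ T → b (J t + 1) ≤ b 0 + 3 * c * (t:ℤ) + (c - 1) := by
    intro t ht
    have := hstep _ (hJspec t ht).1
    linarith [hJlow t ht]
  have hdisj : ∀ s t : ℕ, s < t → t ≤ T → Disjoint (F (P (J s))) (F (P (J t))) := by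
    intro s t hst ht
    have hs : s ≤ T := by omega
    rw [Finset.disjoint_left]
    intro w hws hwt
    have h1 := abs_le.mp (hclose _ _ hws)
    have h2 := abs_le.mp (hclose _ _ hwt)
    have hDD : dhat (P (J t)) ≤ dhat (P (J s)) + 2 * c := by linarith [h1.1, h1.2, h2.1, h2.2]
    have hθst : b 0 + 3*c*(s:ℤ) + 3*c ≤ b 0 + 3*c*(t:ℤ) := by
      have hst' : (s:ℤ) + 1 ≤ (t:ℤ) := by exact_mod_cast hst
      nlinarith
    have hJle : J s ≤ J t := by
      have hQ : J t < L ∧ b 0 + 3 * c * ((min s T : ℕ) : ℤ) < b (J t + 1) := by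
        refine ⟨(hJspec t ht).1, ?_⟩
        rw [min_eq_left hs]
        linarith [(hJspec t ht).2]
      simpa only [hJ] using Nat.find_le hQ
    have hJne : J s ≠ J t := by
      intro hEq
      have hns := hJnext s hs
      rw [hEq] at hns
      linarith [(hJspec t ht).2]
    have hJlt : (J s : ℤ) + 1 ≤ (J t : ℤ) := by
      exact_mod_cast lt_of_le_of_ne hJle hJne
    have hbJt : b (J t) ≤ b 0 + 3*c*(s:ℤ) + 2*c - 1 := by
      have e1 : b (J t) = dhat (P (J t)) - ((J t : ℕ) : ℤ) := hbeq _
      have e2 : b (J s) = dhat (P (J s)) - ((J s : ℕ) : ℤ) := hbeq _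
      linarith [hJlow s hs]
    have hfin := hstep (J t) (hJspec t ht).1
    linarith [(hJspec t ht).2]
  have hcard : ((Finset.range (T+1)).biUnion (fun t => F (P (J t)))).card
      = ∑ t ∈ Finset.range (T+1), (F (P (J t))).card := by
    apply Finset.card_biUnion
    intro s hs' t ht' hne
    rcases lt_or_gt_of_ne hne with h | h
    · exact hdisj s t h (Nat.lt_succ_iff.mp (Finset.mem_range.mp ht'))
    · exact (hdisj t s h (Nat.lt_succ_iff.mp (Finset.mem_range.mp hs'))).symm
  have hsum_le : (∑ t ∈ Finset.range (T+1), (F (P (J t))).card) ≤ n := by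
    rw [← hcard, hn]
    exact Finset.card_le_univ _
  have hcount : m * ((T:ℤ) + 1) ≤ (n : ℤ) := by
    have h1 : ∑ _t ∈ Finset.range (T+1), m
        ≤ ∑ t ∈ Finset.range (T+1), ((F (P (J t))).card : ℤ) := by
      apply Finset.sum_le_sum
      intro t ht'
      exact hheavy _ (hJbadmem t (Nat.lt_succ_iff.mp (Finset.mem_range.mp ht'))).2
    have h2 : (∑ _t ∈ Finset.range (T+1), m) = ((T:ℤ)+1) * m := by
      rw [Finset.sum_const, Finset.card_range]
      push_cast
      ring
    have h3 : (∑ t ∈ Finset.range (T+1), ((F (P (J t))).card : ℤ)) ≤ (n:ℤ) := by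
      rw [← Nat.cast_sum]
      exact_mod_cast hsum_le
    nlinarith [h1, h2, h3]
  calc m * E ≤ m * (3 * c * ((T:ℤ)+1)) := mul_le_mul_of_nonneg_left hT2 (by linarith)
    _ = 3 * c * (m * ((T:ℤ)+1)) := by ring
    _ ≤ 3 * c * (n:ℤ) := mul_le_mul_of_nonneg_left hcount (by linarith)
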